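/- For any conditional distribution Q_{Y|X} with joint Q = P × Q_{Y|X} and Q_Y = (P×W)_Y, the exponent E₂ = min_{Q_{Y|X}} { 𝒟(Q_{Y|X}‖W|P) + [R̄(α−β; (P×Q_{Y|X})_Y) − R]_+ } vanishes if and only if R ≥ R̄(α−β; (P×W)_Y) (taking Q_{Y|X} = W makes the divergence zero). Consequently, if α − β ≤ D(P×W) then the decoding-error exponent min{E₁, E₂} is positive for all R < I(P×W); i.e., there is no rate loss relative to ordinary decoding. -/

import Mathlib

open scoped BigOperators

variable {X Y : Type*} [Fintype X] [Fintype Y]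

/-- X-marginal of a joint distribution on `X × Y`. -/
noncomputable def margX (Q : X × Y → ℝ) (x : X) : ℝ := ∑ y, Q (x, y)

/-- Y-marginal of a joint distribution on `X × Y`. -/
noncomputable def margY (Q : X × Y → ℝ) (y : Y) : ℝ := ∑ x, Q (x, y)

/-- Mutual information `I(Q)` of a joint distribution `Q` on `X × Y`. -/
noncomputable def mutInfo (Q : X × Y → ℝ) : ℝ :=
  ∑ x, ∑ y, Q (x, y) * Real.log (Q (x, y) / (margX Q x * margY Q y))

/-- Expected "distortion" `D(Q) = E_Q[d(X,Y)]`. -/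
noncomputable def Dav (d : X → Y → ℝ) (Q : X × Y → ℝ) : ℝ :=
  ∑ x, ∑ y, Q (x, y) * d x y

/-- `Q` is a joint distribution with X-marginal `P` and Y-marginal `QY`. -/
def IsJoint (P : X → ℝ) (QY : Y → ℝ) (Q : X × Y → ℝ) : Prop :=
  (∀ p, 0 ≤ Q p) ∧ (∀ x, margX Q x = P x) ∧ (∀ y, margY Q y = QY y)

/-- `QYX` is a conditional distribution (channel) from `X` to `Y`. -/
def IsCond (QYX : X → Y → ℝ) : Prop :=
  (∀ x y, 0 ≤ QYX x y) ∧ (∀ x, ∑ y, QYX x y = 1)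

/-- Conditional divergence `𝒟(Q_{Y|X} ‖ W | P)`. -/
noncomputable def condDiv (P : X → ℝ) (QYX W : X → Y → ℝ) : ℝ :=
  ∑ x, P x * ∑ y, QYX x y * Real.log (QYX x y / W x y)

/-- The rate function `R̄(Δ; Q_Y)` as an extended real (`+∞` for an empty constraint
set): infimum of `I(Q)` over joints with X-marginal `P`, Y-marginal `QY`, `D(Q) ≤ Δ`. -/
noncomputable def RbarE (P : X → ℝ) (d : X → Y → ℝ) (Δ : ℝ) (QY : Y → ℝ) : EReal :=
  ⨅ Q : {Q : X × Y → ℝ // IsJoint P QY Q ∧ Dav d Q ≤ Δ}, ((mutInfo Q.1 : ℝ) : EReal)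

/-- The exponent `E₁` (extended real). -/
noncomputable def E1exp (P : X → ℝ) (W : X → Y → ℝ) (d : X → Y → ℝ) (α β R : ℝ) : EReal :=
  ⨅ QYX : {Q : X → Y → ℝ // IsCond Q ∧
      Dav d (fun p => P p.1 * Q p.1 p.2) ≤ max α 0 - β},
    (((condDiv P QYX.1 W : ℝ) : EReal) +
      max (RbarE P d (Dav d (fun p => P p.1 * QYX.1 p.1 p.2))
            (margY (fun p => P p.1 * QYX.1 p.1 p.2)) - (R : EReal)) 0)

/-- The exponent `E₂` (extended real). -/
noncomputable def E2exp (P : X → ℝ) (W : X → Y → ℝ) (d : X → Y → ℝ) (α β R : ℝ) : EReal :=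
  ⨅ QYX : {Q : X → Y → ℝ // IsCond Q},
    (((condDiv P QYX.1 W : ℝ) : EReal) +
      max (RbarE P d (α - β) (margY (fun p => P p.1 * QYX.1 p.1 p.2)) - (R : EReal)) 0)


noncomputable def klP (P : X → ℝ) (W : X → Y → ℝ) (Q : X × Y → ℝ) : ℝ :=
  ∑ x, ∑ y, Q (x, y) * Real.log (Q (x, y) / (P x * W x y))
noncomputable def psiD (Q0 QY : Y → ℝ) : ℝ := ∑ y, QY y * Real.log (QY y / Q0 y)

lemma pt_gibbs {q w : ℝ} (hq : 0 ≤ q) (hw : 0 ≤ w) (h : q ≠ 0 → 0 < w) :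
    q - w ≤ q * Real.log (q / w) := by
  rcases eq_or_lt_of_le hq with h0 | hq'
  · rw [← h0]; simp; linarith
  · have hw' := h hq'.ne'
    have hlog : Real.log (w / q) ≤ w / q - 1 := Real.log_le_sub_one_of_pos (div_pos hw' hq')
    have hinv : Real.log (q / w) = - Real.log (w / q) := by rw [← Real.log_inv, inv_div]
    have h2 : q * Real.log (w / q) ≤ q * (w / q - 1) :=
      mul_le_mul_of_nonneg_left hlog hq
    have h3 : q * (w / q) = w := by field_simp
    rw [hinv]
    nlinarith

lemma pt_gibbs_strict {q w : ℝ} (hq : 0 ≤ q) (hw : 0 < w) (hne : q ≠ w) :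
    q - w < q * Real.log (q / w) := by
  rcases eq_or_lt_of_le hq with h0 | hq'
  · rw [← h0]; simp; linarith
  · have hx : w / q ≠ 1 := by
      intro hcon
      exact hne (by field_simp at hcon; linarith)
    have hlog : Real.log (w / q) < w / q - 1 :=
      Real.log_lt_sub_one_of_pos (div_pos hw hq') hx
    have hinv : Real.log (q / w) = - Real.log (w / q) := by rw [← Real.log_inv, inv_div]
    have h2 : q * Real.log (w / q) < q * (w / q - 1) :=
      (mul_lt_mul_iff_right₀ hq').mpr hlog
    have h3 : q * (w / q) = w := by field_simp
    rw [hinv]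
    nlinarith

lemma gibbs_sum {ι : Type*} [Fintype ι] {q w : ι → ℝ} (hq : ∀ i, 0 ≤ q i)
    (hw : ∀ i, 0 ≤ w i) (hqw : ∀ i, q i ≠ 0 → 0 < w i)
    (hsum : ∑ i, q i = ∑ i, w i) :
    0 ≤ ∑ i, q i * Real.log (q i / w i) := by
  have h := Finset.sum_le_sum (fun i _ => pt_gibbs (hq i) (hw i) (hqw i))
    (s := Finset.univ)
  rw [Finset.sum_sub_distrib, hsum, sub_self] at h
  exact h

lemma gibbs_eq {ι : Type*} [Fintype ι] {q w : ι → ℝ} (hq : ∀ i, 0 ≤ q i)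
    (hw : ∀ i, 0 < w i) (hsum : ∑ i, q i = ∑ i, w i)
    (hzero : ∑ i, q i * Real.log (q i / w i) = 0) : ∀ i, q i = w i := by
  by_contra hcon
  push_neg at hcon
  obtain ⟨i0, hi0⟩ := hcon
  have h := Finset.sum_lt_sum (s := Finset.univ)
    (f := fun i => q i - w i) (g := fun i => q i * Real.log (q i / w i))
    (fun i _ => pt_gibbs (hq i) (hw i).le (fun _ => hw i))
    ⟨i0, Finset.mem_univ i0, pt_gibbs_strict (hq i0) (hw i0) hi0⟩
  rw [Finset.sum_sub_distrib, hsum, sub_self, hzero] at h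
  exact lt_irrefl 0 h

lemma entry_le_margX {Q : X × Y → ℝ} (hQ : ∀ p, 0 ≤ Q p) (x : X) (y : Y) :
    Q (x, y) ≤ margX Q x :=
  Finset.single_le_sum (fun y' _ => hQ (x, y')) (Finset.mem_univ y)

lemma entry_le_margY {Q : X × Y → ℝ} (hQ : ∀ p, 0 ≤ Q p) (x : X) (y : Y) :
    Q (x, y) ≤ margY Q y :=
  Finset.single_le_sum (fun x' _ => hQ (x', y)) (Finset.mem_univ x)

lemma condDiv_nonneg {P : X → ℝ} (hP0 : ∀ x, 0 ≤ P x) {V W : X → Y → ℝ}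
    (hV : IsCond V) (hW : ∀ x y, 0 < W x y) (hWsum : ∀ x, ∑ y, W x y = 1) :
    0 ≤ condDiv P V W := by
  apply Finset.sum_nonneg
  intro x _
  apply mul_nonneg (hP0 x)
  exact gibbs_sum (fun y => hV.1 x y) (fun y => (hW x y).le) (fun y _ => hW x y)
    ((hV.2 x).trans (hWsum x).symm)

lemma condDiv_rows {P : X → ℝ} (hP0 : ∀ x, 0 ≤ P x) {V W : X → Y → ℝ}
    (hV : IsCond V) (hW : ∀ x y, 0 < W x y) (hWsum : ∀ x, ∑ y, W x y = 1)
    (hzero : condDiv P V W = 0) : ∀ x, P x ≠ 0 → ∀ y, V x y = W x y := by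
  intro x hx
  have hterm : ∀ x' ∈ Finset.univ, (0:ℝ) ≤ P x' * ∑ y, V x' y * Real.log (V x' y / W x' y) :=
    fun x' _ => mul_nonneg (hP0 x')
      (gibbs_sum (fun y => hV.1 x' y) (fun y => (hW x' y).le) (fun y _ => hW x' y)
        ((hV.2 x').trans (hWsum x').symm))
  have hall := (Finset.sum_eq_zero_iff_of_nonneg hterm).mp hzero x (Finset.mem_univ x)
  have hg : ∑ y, V x y * Real.log (V x y / W x y) = 0 := by
    rcases mul_eq_zero.mp hall with h | h
    · exact absurd h hx
    · exact h
  exact gibbs_eq (fun y => hV.1 x y) (hW x) ((hV.2 x).trans (hWsum x).symm) hg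

lemma mutInfo_eq {P : X → ℝ} {W : X → Y → ℝ} (hW : ∀ x y, 0 < W x y)
    {Q0 : Y → ℝ} (hQ0 : ∀ y, 0 < Q0 y) {d : X → Y → ℝ}
    (hd : ∀ x y, d x y = Real.log (Q0 y / W x y))
    {QY : Y → ℝ} {Q : X × Y → ℝ} (hJ : IsJoint P QY Q) :
    mutInfo Q = klP P W Q - psiD Q0 QY - Dav d Q := by
  have key : ∀ x y, Q (x, y) * Real.log (Q (x, y) / (P x * W x y)) =
      Q (x, y) * Real.log (Q (x, y) / (margX Q x * margY Q y)) + Q (x, y) * d x y +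
        Q (x, y) * Real.log (QY y / Q0 y) := by
    intro x y
    rcases eq_or_lt_of_le (hJ.1 (x, y)) with h0 | hpos
    · rw [← h0]; ring
    · have hPx : 0 < P x := lt_of_lt_of_le hpos ((hJ.2.1 x) ▸ entry_le_margX hJ.1 x y)
      have hQYy : 0 < QY y := lt_of_lt_of_le hpos ((hJ.2.2 y) ▸ entry_le_margY hJ.1 x y)
      rw [hJ.2.1 x, hJ.2.2 y, hd x y]
      rw [Real.log_div hpos.ne' (mul_pos hPx (hW x y)).ne',
        Real.log_div hpos.ne' (mul_pos hPx hQYy).ne',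
        Real.log_mul hPx.ne' (hW x y).ne', Real.log_mul hPx.ne' hQYy.ne',
        Real.log_div (hQ0 y).ne' (hW x y).ne', Real.log_div hQYy.ne' (hQ0 y).ne']
      ring
  have hklP : klP P W Q = mutInfo Q + Dav d Q + ∑ x, ∑ y, Q (x, y) * Real.log (QY y / Q0 y) := by
    unfold klP mutInfo Dav
    rw [← Finset.sum_add_distrib, ← Finset.sum_add_distrib]
    apply Finset.sum_congr rfl
    intro x _
    rw [← Finset.sum_add_distrib, ← Finset.sum_add_distrib]
    exact Finset.sum_congr rfl fun y _ => key x y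
  have hpsi : ∑ x, ∑ y, Q (x, y) * Real.log (QY y / Q0 y) = psiD Q0 QY := by
    rw [Finset.sum_comm]
    unfold psiD
    apply Finset.sum_congr rfl
    intro y _
    rw [← Finset.sum_mul]
    congr 1
    exact hJ.2.2 y
  rw [hpsi] at hklP
  linarith

lemma klP_nonneg {P : X → ℝ} (hPsum : ∑ x, P x = 1) {W : X → Y → ℝ}
    (hW : ∀ x y, 0 < W x y) (hWsum : ∀ x, ∑ y, W x y = 1)
    {QY : Y → ℝ} {Q : X × Y → ℝ} (hJ : IsJoint P QY Q) (hP0 : ∀ x, 0 ≤ P x) :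
    0 ≤ klP P W Q := by
  have h : klP P W Q = ∑ p : X × Y, Q p * Real.log (Q p / (P p.1 * W p.1 p.2)) := by
    rw [Fintype.sum_prod_type]; rfl
  rw [h]
  apply gibbs_sum hJ.1
  · exact fun p => mul_nonneg (hP0 p.1) (hW p.1 p.2).le
  · intro p hp
    have hpos : 0 < Q p := lt_of_le_of_ne (hJ.1 p) (Ne.symm hp)
    have hPx : 0 < P p.1 := by
      have := entry_le_margX hJ.1 p.1 p.2
      rw [hJ.2.1 p.1] at this
      exact lt_of_lt_of_le hpos this
    exact mul_pos hPx (hW p.1 p.2)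
  · have h1 : ∀ x, ∑ y, Q (x, y) = P x := fun x => hJ.2.1 x
    have h2 : ∀ x, ∑ y, P x * W x y = P x := by
      intro x; rw [← Finset.mul_sum, hWsum x, mul_one]
    have e1 : ∑ p : X × Y, Q p = ∑ x, P x := by
      rw [Fintype.sum_prod_type]; exact Finset.sum_congr rfl fun x _ => h1 x
    have e2 : ∑ p : X × Y, P p.1 * W p.1 p.2 = ∑ x, P x := by
      rw [Fintype.sum_prod_type]; exact Finset.sum_congr rfl fun x _ => h2 x
    rw [e1, e2]

lemma isJoint_PW {P : X → ℝ} (hP0 : ∀ x, 0 ≤ P x) {W : X → Y → ℝ}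
    (hW : ∀ x y, 0 < W x y) (hWsum : ∀ x, ∑ y, W x y = 1) :
    IsJoint P (margY fun p : X × Y => P p.1 * W p.1 p.2) (fun p : X × Y => P p.1 * W p.1 p.2) := by
  refine ⟨fun p => mul_nonneg (hP0 p.1) (hW p.1 p.2).le, fun x => ?_, fun y => rfl⟩
  show ∑ y, P x * W x y = P x
  rw [← Finset.mul_sum, hWsum x, mul_one]

lemma klP_PW {P : X → ℝ} (hP0 : ∀ x, 0 ≤ P x) {W : X → Y → ℝ} (hW : ∀ x y, 0 < W x y) :
    klP P W (fun p : X × Y => P p.1 * W p.1 p.2) = 0 := by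
  unfold klP
  apply Finset.sum_eq_zero
  intro x _
  apply Finset.sum_eq_zero
  intro y _
  show P x * W x y * Real.log ((P x * W x y) / (P x * W x y)) = 0
  rcases eq_or_lt_of_le (hP0 x) with h0 | hpos
  · rw [← h0]; simp
  · rw [div_self (mul_pos hpos (hW x y)).ne', Real.log_one, mul_zero]

lemma mutInfo_PW {P : X → ℝ} (hP0 : ∀ x, 0 ≤ P x) {W : X → Y → ℝ}
    (hW : ∀ x y, 0 < W x y) (hWsum : ∀ x, ∑ y, W x y = 1)
    {Q0 : Y → ℝ} (hQ0 : ∀ y, 0 < Q0 y) {d : X → Y → ℝ}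
    (hd : ∀ x y, d x y = Real.log (Q0 y / W x y)) :
    mutInfo (fun p : X × Y => P p.1 * W p.1 p.2) =
      - psiD Q0 (margY fun p : X × Y => P p.1 * W p.1 p.2) -
        Dav d (fun p : X × Y => P p.1 * W p.1 p.2) := by
  have h := mutInfo_eq hW hQ0 hd (isJoint_PW hP0 hW hWsum)
  rw [klP_PW hP0 hW] at h
  linarith

lemma Rbar_ge {P : X → ℝ} (hP0 : ∀ x, 0 ≤ P x) (hPsum : ∑ x, P x = 1)
    {W : X → Y → ℝ} (hW : ∀ x y, 0 < W x y) (hWsum : ∀ x, ∑ y, W x y = 1)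
    {Q0 : Y → ℝ} (hQ0 : ∀ y, 0 < Q0 y) {d : X → Y → ℝ}
    (hd : ∀ x y, d x y = Real.log (Q0 y / W x y)) (Δ : ℝ) (QY : Y → ℝ) :
    ((- psiD Q0 QY - Δ : ℝ) : EReal) ≤ RbarE P d Δ QY := by
  apply le_iInf
  rintro ⟨Q, hJ, hD⟩
  apply EReal.coe_le_coe_iff.mpr
  have h1 := mutInfo_eq hW hQ0 hd hJ
  have h2 := klP_nonneg hPsum hW hWsum hJ hP0
  simp only
  linarith

lemma continuous_margY_app (y : Y) : Continuous fun Q : X × Y → ℝ => margY Q y :=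
  continuous_finset_sum _ fun x _ => continuous_apply (x, y)

lemma continuous_margX_app (x : X) : Continuous fun Q : X × Y → ℝ => margX Q x :=
  continuous_finset_sum _ fun y _ => continuous_apply (x, y)

lemma continuous_margY_fn : Continuous (margY : (X × Y → ℝ) → Y → ℝ) :=
  continuous_pi fun y => continuous_margY_app y

lemma continuous_Dav (d : X → Y → ℝ) : Continuous fun Q : X × Y → ℝ => Dav d Q :=
  continuous_finset_sum _ fun x _ =>
    continuous_finset_sum _ fun y _ => (continuous_apply (x, y)).mul continuous_const

lemma continuousOn_mutInfo (P : X → ℝ) {c : ℝ} (hc : 0 < c) :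
    ContinuousOn mutInfo
      {Q : X × Y → ℝ | (∀ p, 0 ≤ Q p) ∧ (∀ x, margX Q x = P x) ∧ ∀ y, c ≤ margY Q y} := by
  apply ContinuousOn.congr (f := fun Q : X × Y → ℝ =>
      ∑ x, ∑ y, (Q (x, y) * Real.log (Q (x, y)) - Q (x, y) * Real.log (P x)
        - Q (x, y) * Real.log (margY Q y)))
  · apply continuousOn_finset_sum
    intro x _
    apply continuousOn_finset_sum
    intro y _
    apply ContinuousOn.sub
    apply ContinuousOn.sub
    · exact (Real.continuous_mul_log.comp (continuous_apply (x, y))).continuousOn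
    · exact ((continuous_apply (x, y)).mul continuous_const).continuousOn
    · apply ContinuousOn.mul (continuous_apply (x, y)).continuousOn
      intro Q hQ
      have hm : margY Q y ≠ 0 := (lt_of_lt_of_le hc (hQ.2.2 y)).ne'
      exact (ContinuousAt.log (continuous_margY_app y).continuousAt hm).continuousWithinAt
  · intro Q hQ
    unfold mutInfo
    apply Finset.sum_congr rfl; intro x _
    apply Finset.sum_congr rfl; intro y _
    rcases eq_or_lt_of_le (hQ.1 (x, y)) with h0 | hpos
    · rw [← h0]; ring
    · have hPx : 0 < P x := lt_of_lt_of_le hpos ((hQ.2.1 x) ▸ entry_le_margX hQ.1 x y)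
      have hmY : 0 < margY Q y := lt_of_lt_of_le hc (hQ.2.2 y)
      rw [hQ.2.1 x, Real.log_div hpos.ne' (mul_pos hPx hmY).ne',
        Real.log_mul hPx.ne' hmY.ne']
      ring

lemma keyF {P : X → ℝ} (hP0 : ∀ x, 0 ≤ P x)
    {W : X → Y → ℝ} (hW : ∀ x y, 0 < W x y) (hWsum : ∀ x, ∑ y, W x y = 1)
    (d : X → Y → ℝ) {δ : ℝ} (hδ : 0 < δ) :
    ∃ ε > 0, ∀ V : X → Y → ℝ, IsCond V → condDiv P V W < ε →
      dist (margY fun p : X × Y => P p.1 * V p.1 p.2)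
          (margY fun p : X × Y => P p.1 * W p.1 p.2) < δ ∧
      Dav d (fun p : X × Y => P p.1 * V p.1 p.2) <
        Dav d (fun p : X × Y => P p.1 * W p.1 p.2) + δ := by
  set mY : (X → Y → ℝ) → Y → ℝ := fun V => margY fun p : X × Y => P p.1 * V p.1 p.2 with hmY
  set DV : (X → Y → ℝ) → ℝ := fun V => Dav d fun p : X × Y => P p.1 * V p.1 p.2 with hDV
  have hmYcont : Continuous mY := continuous_pi fun y =>
    continuous_finset_sum _ fun x _ =>
      continuous_const.mul ((continuous_apply y).comp (continuous_apply x))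
  have hDVcont : Continuous DV := by
    have hdv : DV = fun V => ∑ x, ∑ y, P x * V x y * d x y := rfl
    rw [hdv]
    refine continuous_finset_sum _ fun x _ => continuous_finset_sum _ fun y _ => ?_
    have hev : Continuous fun V : X → Y → ℝ => V x y :=
      (continuous_apply y).comp (continuous_apply x)
    exact (continuous_const.mul hev).mul continuous_const
  set C : Set (X → Y → ℝ) :=
    ({V | ∀ x y, 0 ≤ V x y} ∩ {V | ∀ x, ∑ y, V x y = 1}) ∩
      ({V | δ ≤ dist (mY V) (mY W)} ∪ {V | DV W + δ ≤ DV V}) with hC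
  have hCclosed : IsClosed C := by
    apply IsClosed.inter
    · apply IsClosed.inter
      · rw [Set.setOf_forall]
        refine isClosed_iInter fun x => ?_
        rw [Set.setOf_forall]
        exact isClosed_iInter fun y =>
          isClosed_le continuous_const ((continuous_apply y).comp (continuous_apply x))
      · rw [Set.setOf_forall]
        exact isClosed_iInter fun x => isClosed_eq
          (continuous_finset_sum _ fun y _ => (continuous_apply y).comp (continuous_apply x))
          continuous_const
    · exact (isClosed_le continuous_const (hmYcont.dist continuous_const)).union
        (isClosed_le continuous_const hDVcont)
  have hCsub : C ⊆ Set.pi Set.univ fun _ : X => Set.pi Set.univ fun _ : Y => Set.Icc (0:ℝ) 1 := by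
    intro V hV
    rw [Set.mem_univ_pi]
    intro x
    rw [Set.mem_univ_pi]
    intro y
    refine ⟨hV.1.1 x y, ?_⟩
    calc V x y ≤ ∑ y', V x y' :=
          Finset.single_le_sum (fun y' _ => hV.1.1 x y') (Finset.mem_univ y)
      _ = 1 := hV.1.2 x
  have hCcomp : IsCompact C :=
    IsCompact.of_isClosed_subset
      (isCompact_univ_pi fun _ => isCompact_univ_pi fun _ => isCompact_Icc) hCclosed hCsub
  have hcdOn : ContinuousOn (fun V => condDiv P V W) C := by
    apply ContinuousOn.congr (f := fun V : X → Y → ℝ =>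
      ∑ x, P x * ∑ y, (V x y * Real.log (V x y) - V x y * Real.log (W x y)))
    · apply continuousOn_finset_sum
      intro x _
      apply ContinuousOn.mul continuousOn_const
      apply continuousOn_finset_sum
      intro y _
      exact ((Real.continuous_mul_log.comp
        ((continuous_apply y).comp (continuous_apply x))).continuousOn).sub
        ((by fun_prop :
          Continuous fun V : X → Y → ℝ => V x y * Real.log (W x y))).continuousOn
    · intro V hV
      unfold condDiv
      apply Finset.sum_congr rfl; intro x _
      congr 1
      apply Finset.sum_congr rfl; intro y _
      rcases eq_or_lt_of_le (hV.1.1 x y) with h0 | hpos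
      · rw [← h0]; ring
      · rw [Real.log_div hpos.ne' (hW x y).ne']; ring
  rcases Set.eq_empty_or_nonempty C with hemp | hne
  · refine ⟨1, one_pos, fun V hVc _ => ?_⟩
    have hnot : V ∉ C := by rw [hemp]; exact Set.notMem_empty V
    rw [hC] at hnot
    simp only [Set.mem_inter_iff, Set.mem_union, Set.mem_setOf_eq, not_and, not_or,
      not_le] at hnot
    exact hnot ⟨hVc.1, hVc.2⟩
  · obtain ⟨V0, hV0C, hmin⟩ := hCcomp.exists_isMinOn hne hcdOn
    have hV0cond : IsCond V0 := ⟨hV0C.1.1, hV0C.1.2⟩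
    have hm0 : 0 ≤ condDiv P V0 W := condDiv_nonneg hP0 hV0cond hW hWsum
    have hmpos : 0 < condDiv P V0 W := by
      rcases eq_or_lt_of_le hm0 with h0 | h
      · exfalso
        have hrows := condDiv_rows hP0 hV0cond hW hWsum h0.symm
        have hmYeq : mY V0 = mY W := by
          funext y
          apply Finset.sum_congr rfl
          intro x _
          rcases eq_or_ne (P x) 0 with hx | hx
          · show P x * V0 x y = P x * W x y
            rw [hx, zero_mul, zero_mul]
          · show P x * V0 x y = P x * W x y
            rw [hrows x hx y]
        have hDVeq : DV V0 = DV W := by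
          apply Finset.sum_congr rfl; intro x _
          apply Finset.sum_congr rfl; intro y _
          rcases eq_or_ne (P x) 0 with hx | hx
          · show P x * V0 x y * d x y = P x * W x y * d x y
            rw [hx]; ring
          · show P x * V0 x y * d x y = P x * W x y * d x y
            rw [hrows x hx y]
        rcases hV0C.2 with hbad | hbad
        · rw [Set.mem_setOf_eq, hmYeq, dist_self] at hbad; linarith
        · rw [Set.mem_setOf_eq, hDVeq] at hbad; linarith
      · exact h
    refine ⟨condDiv P V0 W, hmpos, fun V hVc hVlt => ?_⟩
    have hnot : V ∉ C := fun hmem => absurd (hmin hmem) (not_le.mpr hVlt)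
    rw [hC] at hnot
    simp only [Set.mem_inter_iff, Set.mem_union, Set.mem_setOf_eq, not_and, not_or,
      not_le] at hnot
    exact hnot ⟨hVc.1, hVc.2⟩

lemma keyG {P : X → ℝ} (hP0 : ∀ x, 0 ≤ P x) (hPsum : ∑ x, P x = 1)
    {QYs : Y → ℝ} {c0 : ℝ} (hc0 : 0 < c0) (hQYs : ∀ y, c0 ≤ QYs y)
    (d : X → Y → ℝ) (Δ c : ℝ)
    (H : ∀ r : ℝ, 0 < r → ∃ Q : X × Y → ℝ, (∀ p, 0 ≤ Q p) ∧ (∀ x, margX Q x = P x) ∧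
      dist (margY Q) QYs < r ∧ Dav d Q ≤ Δ ∧ mutInfo Q ≤ c) :
    RbarE P d Δ QYs ≤ (c : EReal) := by
  set S : Set (X × Y → ℝ) :=
    {Q | (∀ p, 0 ≤ Q p) ∧ (∀ x, margX Q x = P x) ∧ ∀ y, c0 / 2 ≤ margY Q y} with hS
  have hSclosed : IsClosed S := by
    rw [hS, Set.setOf_and]
    apply IsClosed.inter
    · rw [Set.setOf_forall]
      exact isClosed_iInter fun p => isClosed_le continuous_const (continuous_apply p)
    · rw [Set.setOf_and]
      apply IsClosed.inter
      · rw [Set.setOf_forall]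
        exact isClosed_iInter fun x =>
          isClosed_eq (continuous_margX_app x) continuous_const
      · rw [Set.setOf_forall]
        exact isClosed_iInter fun y => isClosed_le continuous_const (continuous_margY_app y)
  set K : Set (X × Y → ℝ) := (S ∩ mutInfo ⁻¹' Set.Iic c) ∩ {Q | Dav d Q ≤ Δ} with hK
  have hKclosed : IsClosed K :=
    ((continuousOn_mutInfo P (half_pos hc0)).preimage_isClosed_of_isClosed hSclosed
      isClosed_Iic).inter (isClosed_le (continuous_Dav d) continuous_const)
  have hKsub : K ⊆ Set.pi Set.univ fun _ : X × Y => Set.Icc (0:ℝ) 1 := by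
    intro Q hQ
    rw [Set.mem_univ_pi]
    intro p
    refine ⟨hQ.1.1.1 p, ?_⟩
    have h1 : Q p ≤ margX Q p.1 := entry_le_margX hQ.1.1.1 p.1 p.2
    have h2 : P p.1 ≤ ∑ x, P x :=
      Finset.single_le_sum (fun x _ => hP0 x) (Finset.mem_univ p.1)
    rw [hQ.1.1.2.1 p.1] at h1
    rw [hPsum] at h2
    linarith
  have hKcomp : IsCompact K :=
    IsCompact.of_isClosed_subset (isCompact_univ_pi fun _ => isCompact_Icc) hKclosed hKsub
  have himg : IsClosed (margY '' K) := (hKcomp.image continuous_margY_fn).isClosed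
  have hmem : QYs ∈ margY '' K := by
    rw [← himg.closure_eq, Metric.mem_closure_iff]
    intro r hr
    obtain ⟨Q, hQ0', hQx, hQdist, hQD, hQI⟩ := H (min r (c0 / 2)) (lt_min hr (half_pos hc0))
    refine ⟨margY Q, ⟨Q, ⟨⟨⟨hQ0', hQx, fun y => ?_⟩, hQI⟩, hQD⟩, rfl⟩, ?_⟩
    · have h1 : dist (margY Q y) (QYs y) ≤ dist (margY Q) QYs := dist_le_pi_dist _ _ y
      have h2 : |margY Q y - QYs y| < c0 / 2 := by
        rw [← Real.dist_eq]
        exact lt_of_le_of_lt h1 (lt_of_lt_of_le hQdist (min_le_right _ _))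
      have h3 := hQYs y
      rcases abs_lt.mp h2 with ⟨h4, _⟩
      linarith
    · rw [dist_comm]
      exact lt_of_lt_of_le hQdist (min_le_left _ _)
  obtain ⟨Q, hQK, hQm⟩ := hmem
  have hJ : IsJoint P QYs Q := ⟨hQK.1.1.1, hQK.1.1.2.1, fun y => by rw [← hQm]⟩
  have hle : RbarE P d Δ QYs ≤ ((mutInfo Q : ℝ) : EReal) :=
    iInf_le (fun Q : {Q : X × Y → ℝ // IsJoint P QYs Q ∧ Dav d Q ≤ Δ} =>
      ((mutInfo Q.1 : ℝ) : EReal)) ⟨Q, hJ, hQK.2⟩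
  exact le_trans hle (EReal.coe_le_coe_iff.mpr hQK.1.2)

lemma ereal_le_of_add_eps {a : EReal} {r : ℝ}
    (h : ∀ ε : ℝ, 0 < ε → a ≤ ((r + ε : ℝ) : EReal)) : a ≤ (r : EReal) := by
  induction a using EReal.rec with
  | bot => exact bot_le
  | coe a =>
    apply EReal.coe_le_coe_iff.mpr
    by_contra hc
    push_neg at hc
    have := EReal.coe_le_coe_iff.mp (h ((a - r) / 2) (by linarith))
    linarith
  | top => exact ((EReal.coe_lt_top (r + 1)).not_ge (h 1 one_pos)).elim

lemma ereal_parts {cd : ℝ} {m : EReal} (hcd : 0 ≤ cd) (hm : 0 ≤ m) {ε : ℝ}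
    (h : ((cd : ℝ) : EReal) + m < (ε : EReal)) : cd < ε ∧ m < (ε : EReal) := by
  constructor
  · have h1 : ((cd : ℝ) : EReal) ≤ ((cd : ℝ) : EReal) + m := le_add_of_nonneg_right hm
    exact_mod_cast lt_of_le_of_lt h1 h
  · have h2 : m ≤ ((cd : ℝ) : EReal) + m :=
      le_add_of_nonneg_left (EReal.coe_nonneg.mpr hcd)
    exact lt_of_le_of_lt h2 h


set_option maxHeartbeats 2000000

/-- `E₂ = 0` iff `R ≥ R̄(α−β; (P×W)_Y)`; consequently, if
`α − β ≤ D(P×W)` then `min{E₁, E₂} > 0` for every rate `R < I(P×W)` — no rate loss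
relative to ordinary decoding. -/
theorem stmt19 {X Y : Type*} [Fintype X] [Fintype Y]
    (P : X → ℝ) (hP : (∀ x, 0 ≤ P x) ∧ ∑ x, P x = 1)
    (W : X → Y → ℝ) (hW : ∀ x y, 0 < W x y) (hWsum : ∀ x, ∑ y, W x y = 1)
    (Q0 : Y → ℝ) (hQ0 : ∀ y, 0 < Q0 y) (hQ0sum : ∑ y, Q0 y = 1)
    (d : X → Y → ℝ) (hd : ∀ x y, d x y = Real.log (Q0 y / W x y))
    (PW : X × Y → ℝ) (hPW : ∀ p, PW p = P p.1 * W p.1 p.2)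
    (α β R : ℝ) (hR : 0 ≤ R) :
    (E2exp P W d α β R = 0 ↔ RbarE P d (α - β) (margY PW) ≤ (R : EReal))
    ∧ (α - β ≤ Dav d PW → R < mutInfo PW →
        0 < min (E1exp P W d α β R) (E2exp P W d α β R)) := by
  obtain ⟨hP0, hPsum⟩ := hP
  have hPWf : PW = fun p : X × Y => P p.1 * W p.1 p.2 := funext hPW
  subst hPWf
  have hXne : Nonempty X := by
    by_contra hcon
    rw [not_nonempty_iff] at hcon
    rw [Finset.univ_eq_empty, Finset.sum_empty] at hPsum
    exact one_ne_zero hPsum.symm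
  have hYne : Nonempty Y := by
    obtain ⟨x⟩ := hXne
    by_contra hcon
    rw [not_nonempty_iff] at hcon
    have h := hWsum x
    rw [Finset.univ_eq_empty, Finset.sum_empty] at h
    exact one_ne_zero h.symm
  set QYs : Y → ℝ := margY fun p : X × Y => P p.1 * W p.1 p.2 with hQYsdef
  have hQYspos : ∀ y, 0 < QYs y := by
    intro y
    obtain ⟨x0, _, hx0⟩ := Finset.exists_ne_zero_of_sum_ne_zero
      (show ∑ x, P x ≠ 0 by rw [hPsum]; exact one_ne_zero)
    apply Finset.sum_pos' (fun x _ => mul_nonneg (hP0 x) (hW x y).le)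
    exact ⟨x0, Finset.mem_univ x0, mul_pos (lt_of_le_of_ne (hP0 x0) (Ne.symm hx0)) (hW x0 y)⟩
  obtain ⟨y0, _, hy0⟩ := Finset.exists_min_image Finset.univ QYs
    ⟨Classical.arbitrary Y, Finset.mem_univ _⟩
  have hc0 : 0 < QYs y0 := hQYspos y0
  have hc0le : ∀ y, QYs y0 ≤ QYs y := fun y => hy0 y (Finset.mem_univ y)
  have hWcond : IsCond W := ⟨fun x y => (hW x y).le, hWsum⟩
  have hcdWW : condDiv P W W = 0 := by
    apply Finset.sum_eq_zero; intro x _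
    rw [Finset.sum_eq_zero, mul_zero]
    intro y _
    rw [div_self (hW x y).ne', Real.log_one, mul_zero]
  have hE2nn : (0:EReal) ≤ E2exp P W d α β R := by
    apply le_iInf
    rintro ⟨V, hV⟩
    exact add_nonneg (EReal.coe_nonneg.mpr (condDiv_nonneg hP0 hV hW hWsum)) (le_max_right _ _)
  have hfwd : E2exp P W d α β R = 0 → RbarE P d (α - β) QYs ≤ (R : EReal) := by
    intro h0
    apply ereal_le_of_add_eps
    intro ε₀ hε₀
    apply keyG hP0 hPsum hc0 hc0le d (α - β) (R + ε₀)
    intro r hr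
    obtain ⟨ε₁, hε₁, hF⟩ := keyF hP0 hW hWsum d hr
    have hε : 0 < min ε₁ ε₀ := lt_min hε₁ hε₀
    have hlt : E2exp P W d α β R < ((min ε₁ ε₀ : ℝ) : EReal) := by
      rw [h0]; exact EReal.coe_pos.mpr hε
    unfold E2exp at hlt
    obtain ⟨⟨V, hVcond⟩, hVlt⟩ := iInf_lt_iff.mp hlt
    obtain ⟨hcd, hmax⟩ := ereal_parts (condDiv_nonneg hP0 hVcond hW hWsum)
      (le_max_right _ _) hVlt
    have hRb1 : RbarE P d (α - β) (margY fun p : X × Y => P p.1 * V p.1 p.2) - (R:EReal)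
        < ((min ε₁ ε₀ : ℝ) : EReal) := lt_of_le_of_lt (le_max_left _ _) hmax
    have hRb2 : RbarE P d (α - β) (margY fun p : X × Y => P p.1 * V p.1 p.2)
        < ((min ε₁ ε₀ + R : ℝ) : EReal) := by
      have h2 := (EReal.sub_lt_iff (Or.inl (EReal.coe_ne_bot R))
        (Or.inl (EReal.coe_ne_top R))).mp hRb1
      rwa [← EReal.coe_add] at h2
    unfold RbarE at hRb2
    obtain ⟨⟨Q, hJQ, hDQ⟩, hIQ⟩ := iInf_lt_iff.mp hRb2
    have hIQ' : mutInfo Q < min ε₁ ε₀ + R := EReal.coe_lt_coe_iff.mp hIQ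
    have hFV := hF V hVcond (lt_of_lt_of_le hcd (min_le_left _ _))
    have hmYQ : margY Q = margY fun p : X × Y => P p.1 * V p.1 p.2 := funext hJQ.2.2
    refine ⟨Q, hJQ.1, hJQ.2.1, ?_, hDQ, ?_⟩
    · rw [hmYQ]; exact hFV.1
    · have hεle : min ε₁ ε₀ ≤ ε₀ := min_le_right _ _
      linarith
  have hbwd : RbarE P d (α - β) QYs ≤ (R : EReal) → E2exp P W d α β R = 0 := by
    intro hRle
    apply le_antisymm _ hE2nn
    have hsub : RbarE P d (α - β) (margY fun p : X × Y => P p.1 * W p.1 p.2) - (R:EReal) ≤ 0 := by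
      apply EReal.sub_le_of_le_add
      rw [zero_add]
      exact hRle
    have hterm : (((condDiv P W W : ℝ)) : EReal) +
        max (RbarE P d (α - β) (margY fun p : X × Y => P p.1 * W p.1 p.2) - (R:EReal)) 0
          = 0 := by
      rw [hcdWW, max_eq_right hsub]
      simp
    unfold E2exp
    exact le_trans (iInf_le (fun QYX : {Q : X → Y → ℝ // IsCond Q} =>
      (((condDiv P QYX.1 W : ℝ)) : EReal) +
        max (RbarE P d (α - β) (margY fun p : X × Y => P p.1 * QYX.1 p.1 p.2) - (R:EReal)) 0)
      ⟨W, hWcond⟩) (le_of_eq hterm)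
  refine ⟨⟨hfwd, hbwd⟩, ?_⟩
  intro hΔle hRlt
  have hIpw : mutInfo (fun p : X × Y => P p.1 * W p.1 p.2) =
      - psiD Q0 QYs - Dav d (fun p : X × Y => P p.1 * W p.1 p.2) :=
    mutInfo_PW hP0 hW hWsum hQ0 hd
  have hRbarLB : ∀ Δ : ℝ, ((- psiD Q0 QYs - Δ : ℝ) : EReal) ≤ RbarE P d Δ QYs :=
    fun Δ => Rbar_ge hP0 hPsum hW hWsum hQ0 hd Δ QYs
  set I : ℝ := mutInfo (fun p : X × Y => P p.1 * W p.1 p.2) with hIdef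
  set DPW : ℝ := Dav d (fun p : X × Y => P p.1 * W p.1 p.2) with hDPWdef
  apply lt_min
  · -- E1 positive
    by_contra hcon
    push_neg at hcon
    have hE1nn : (0:EReal) ≤ E1exp P W d α β R := by
      apply le_iInf
      rintro ⟨V, hVcond, _⟩
      exact add_nonneg (EReal.coe_nonneg.mpr (condDiv_nonneg hP0 hVcond hW hWsum))
        (le_max_right _ _)
    have h0 : E1exp P W d α β R = 0 := le_antisymm hcon hE1nn
    have hgap : 0 < I - R := by linarith
    have hkey : RbarE P d (DPW + (I - R) / 4) QYs ≤ ((R + (I - R) / 2 : ℝ) : EReal) := by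
      apply keyG hP0 hPsum hc0 hc0le d
      intro r hr
      have hδ' : 0 < min r ((I - R) / 4) := lt_min hr (by linarith)
      obtain ⟨ε₁, hε₁, hF⟩ := keyF hP0 hW hWsum d hδ'
      have hε : 0 < min ε₁ ((I - R) / 2) := lt_min hε₁ (by linarith)
      have hlt : E1exp P W d α β R < ((min ε₁ ((I - R) / 2) : ℝ) : EReal) := by
        rw [h0]; exact EReal.coe_pos.mpr hε
      unfold E1exp at hlt
      obtain ⟨⟨V, hVcond, hVfeas⟩, hVlt⟩ := iInf_lt_iff.mp hlt
      obtain ⟨hcd, hmax⟩ := ereal_parts (condDiv_nonneg hP0 hVcond hW hWsum)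
        (le_max_right _ _) hVlt
      have hRb1 : RbarE P d (Dav d (fun p : X × Y => P p.1 * V p.1 p.2))
          (margY fun p : X × Y => P p.1 * V p.1 p.2) - (R:EReal)
          < ((min ε₁ ((I - R) / 2) : ℝ) : EReal) := lt_of_le_of_lt (le_max_left _ _) hmax
      have hRb2 : RbarE P d (Dav d (fun p : X × Y => P p.1 * V p.1 p.2))
          (margY fun p : X × Y => P p.1 * V p.1 p.2)
          < ((min ε₁ ((I - R) / 2) + R : ℝ) : EReal) := by
        have h2 := (EReal.sub_lt_iff (Or.inl (EReal.coe_ne_bot R))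
          (Or.inl (EReal.coe_ne_top R))).mp hRb1
        rwa [← EReal.coe_add] at h2
      unfold RbarE at hRb2
      obtain ⟨⟨Q, hJQ, hDQ⟩, hIQ⟩ := iInf_lt_iff.mp hRb2
      have hIQ' : mutInfo Q < min ε₁ ((I - R) / 2) + R := EReal.coe_lt_coe_iff.mp hIQ
      have hFV := hF V hVcond (lt_of_lt_of_le hcd (min_le_left _ _))
      have hmYQ : margY Q = margY fun p : X × Y => P p.1 * V p.1 p.2 := funext hJQ.2.2
      refine ⟨Q, hJQ.1, hJQ.2.1, ?_, ?_, ?_⟩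
      · rw [hmYQ]; exact lt_of_lt_of_le hFV.1 (min_le_left _ _)
      · have h5 := hFV.2
        have h6 : min r ((I - R) / 4) ≤ (I - R) / 4 := min_le_right _ _
        linarith
      · have hεle : min ε₁ ((I - R) / 2) ≤ (I - R) / 2 := min_le_right _ _
        linarith
    have hlb := hRbarLB (DPW + (I - R) / 4)
    have hle := le_trans hlb hkey
    rw [EReal.coe_le_coe_iff] at hle
    have : I = - psiD Q0 QYs - DPW := hIpw
    linarith
  · -- E2 positive
    rcases lt_or_eq_of_le hE2nn with h | h
    · exact h
    · exfalso
      have hRle := hfwd h.symm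
      have hlb := hRbarLB (α - β)
      have hle := le_trans hlb hRle
      rw [EReal.coe_le_coe_iff] at hle
      have : I = - psiD Q0 QYs - DPW := hIpw
      linarith
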